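/- Let W* = (I − W)⁻¹ for an N×N real matrix W with I − W invertible, and let s = αᵀW*, e = W*ω, for α, ω ∈ ℝ^N. Then the mixed third-order partial derivative ∂³Z/(∂W_{i₁j₁} ∂W_{i₂j₂} ∂W_{i₃j₃}) of Z = αᵀW*ω equals the sum over all 6 permutations (i'₁,j'₁),(i'₂,j'₂),(i'₃,j'₃) of the three index pairs of s_{i'₁} · W*_{j'₁ i'₂} · W*_{j'₂ i'₃} · e_{j'₃}. -/

import Mathlib

open Matrix

attribute [local instance] Matrix.linftyOpNormedRing Matrix.linftyOpNormedAlgebra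

private lemma hasDerivAt_inv_line {N : ℕ} (A B : Matrix (Fin N) (Fin N) ℝ) (t : ℝ)
    (h : IsUnit (A - t • B).det) :
    HasDerivAt (fun s : ℝ => (A - s • B)⁻¹)
      ((A - t • B)⁻¹ * B * (A - t • B)⁻¹) t := by
  obtain ⟨u, hu⟩ := (Matrix.isUnit_iff_isUnit_det _).2 h
  have h1 : HasDerivAt (fun s : ℝ => A - s • B) (-B) t := by
    have h1' := ((hasDerivAt_id t).smul_const B).const_sub A
    simp only [id, one_smul] at h1'
    exact h1'
  have h2 := (hasFDerivAt_ringInverse (𝕜 := ℝ) u)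
  rw [hu] at h2
  have h3 := h2.comp_hasDerivAt t h1
  simp only [ContinuousLinearMap.neg_apply, ContinuousLinearMap.mulLeftRight_apply] at h3
  have hc : (↑u⁻¹ : Matrix (Fin N) (Fin N) ℝ) = (A - t • B)⁻¹ := by
    rw [← hu, Matrix.coe_units_inv]
  have goalfun : (fun s : ℝ => (A - s • B)⁻¹) = fun s => Ring.inverse (A - s • B) :=
    funext fun s => Matrix.nonsing_inv_eq_ringInverse _
  rw [goalfun]
  simp [hc, mul_neg, neg_mul, Matrix.mul_assoc, Function.comp_def] at h3 ⊢
  exact h3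

private lemma hasDerivAt_inv_line₀ {N : ℕ} (A B : Matrix (Fin N) (Fin N) ℝ)
    (h : IsUnit A.det) :
    HasDerivAt (fun s : ℝ => (A - s • B)⁻¹) (A⁻¹ * B * A⁻¹) 0 := by
  simpa using hasDerivAt_inv_line A B 0 (by simpa using h)

private lemma eventually_isUnit_det {N : ℕ} (A B : Matrix (Fin N) (Fin N) ℝ)
    (h : IsUnit A.det) :
    ∀ᶠ t : ℝ in nhds 0, IsUnit (A - t • B).det := by
  have hc : Continuous fun t : ℝ => (A - t • B).det :=
    Continuous.matrix_det (by continuity)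
  have h0 : (A - (0:ℝ) • B).det ≠ 0 := by simpa using h.ne_zero
  filter_upwards [hc.continuousAt.eventually_ne h0] with t ht
  exact isUnit_iff_ne_zero.2 ht

private noncomputable def Lm {N : ℕ} (α ω : Fin N → ℝ) : Matrix (Fin N) (Fin N) ℝ →L[ℝ] ℝ :=
  LinearMap.toContinuousLinearMap
    { toFun := fun M => α ⬝ᵥ (M *ᵥ ω)
      map_add' := fun M M' => by simp [Matrix.add_mulVec, dotProduct_add]
      map_smul' := fun c M => by simp [Matrix.smul_mulVec, dotProduct_smul] }

@[simp] private lemma Lm_apply {N : ℕ} (α ω : Fin N → ℝ) (M : Matrix (Fin N) (Fin N) ℝ) :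
    Lm α ω M = α ⬝ᵥ (M *ᵥ ω) := rfl

private lemma scalar_extract {N : ℕ} (Q : Matrix (Fin N) (Fin N) ℝ) (α ω : Fin N → ℝ)
    (i1 j1 i2 j2 i3 j3 : Fin N) :
    α ⬝ᵥ ((Q * Matrix.single i1 j1 (1:ℝ) * Q * Matrix.single i2 j2 1 * Q *
        Matrix.single i3 j3 1 * Q) *ᵥ ω)
      = (α ᵥ* Q) i1 * Q j1 i2 * Q j2 i3 * (Q *ᵥ ω) j3 := by
  have hstd : ∀ (i j : Fin N) (x : Fin N → ℝ),
      x ᵥ* Matrix.single i j (1:ℝ) = Pi.single j (x i) := by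
    intro i j x
    ext k
    simp [Matrix.vecMul, dotProduct, Matrix.single, Pi.single_apply, ite_and,
      Finset.sum_ite_eq, eq_comm, mul_comm]
  have hsingle : ∀ (j : Fin N) (c : ℝ), Pi.single j c ᵥ* Q = fun k => c * Q j k := by
    intro j c
    ext k
    rw [Matrix.single_vecMul]
    rfl
  rw [dotProduct_mulVec]
  simp only [← Matrix.vecMul_vecMul, hstd, hsingle]
  simp [dotProduct, Matrix.mulVec, Finset.mul_sum, mul_assoc]

private def permE : Fin 6 → Equiv.Perm (Fin 3) :=
  ![Equiv.refl _, Equiv.swap 1 2, Equiv.swap 0 1, finRotate 3, (finRotate 3).symm,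
    Equiv.swap 0 2]

private lemma permE_bij : Function.Bijective permE := by decide

private lemma permE_val : ∀ (k : Fin 6) (m : Fin 3),
    permE k m = ![![0,1,2],![0,2,1],![1,0,2],![1,2,0],![2,0,1],![2,1,0]] k m := by decide

private lemma perm_sum (f : Fin 3 → Fin 3 → Fin 3 → ℝ) :
    ∑ σ : Equiv.Perm (Fin 3), f (σ 0) (σ 1) (σ 2) =
      f 0 1 2 + f 0 2 1 + f 1 0 2 + f 1 2 0 + f 2 0 1 + f 2 1 0 := by
  rw [← Fintype.sum_bijective permE permE_bij _ (fun σ => f (σ 0) (σ 1) (σ 2)) (fun i => rfl)]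
  rw [Fin.sum_univ_six]
  simp only [permE_val]
  simp

theorem stmt_7 {N : ℕ} (W : Matrix (Fin N) (Fin N) ℝ) (h : IsUnit (1 - W).det)
    (α ω : Fin N → ℝ) (τ : Fin 3 → Fin N × Fin N) :
    HasDerivAt
      (fun u : ℝ =>
        deriv
          (fun v : ℝ =>
            deriv
              (fun w : ℝ =>
                α ⬝ᵥ ((1 - (W + u • Matrix.single (τ 0).1 (τ 0).2 (1 : ℝ)
                              + v • Matrix.single (τ 1).1 (τ 1).2 (1 : ℝ)
                              + w • Matrix.single (τ 2).1 (τ 2).2 (1 : ℝ)))⁻¹ *ᵥ ω)) 0) 0)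
      (∑ σ : Equiv.Perm (Fin 3),
        (α ᵥ* (1 - W)⁻¹) (τ (σ 0)).1 *
          ((1 - W)⁻¹) (τ (σ 0)).2 (τ (σ 1)).1 *
          ((1 - W)⁻¹) (τ (σ 1)).2 (τ (σ 2)).1 *
          ((1 - W)⁻¹ *ᵥ ω) (τ (σ 2)).2) 0 := by
  set E0 := Matrix.single (τ 0).1 (τ 0).2 (1 : ℝ) with hE0
  set E1 := Matrix.single (τ 1).1 (τ 1).2 (1 : ℝ) with hE1
  set E2 := Matrix.single (τ 2).1 (τ 2).2 (1 : ℝ) with hE2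
  set Q := (1 - W)⁻¹ with hQ
  -- inner derivative
  have hinner : ∀ u v : ℝ, IsUnit (1 - W - u • E0 - v • E1).det →
      deriv (fun w : ℝ =>
        α ⬝ᵥ ((1 - (W + u • E0 + v • E1 + w • E2))⁻¹ *ᵥ ω)) 0
        = Lm α ω ((1 - W - u • E0 - v • E1)⁻¹ * E2 * (1 - W - u • E0 - v • E1)⁻¹) := by
    intro u v hN
    have hfun : (fun w : ℝ => α ⬝ᵥ ((1 - (W + u • E0 + v • E1 + w • E2))⁻¹ *ᵥ ω))
        = fun w : ℝ => Lm α ω ((1 - W - u • E0 - v • E1 - w • E2)⁻¹) := by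
      funext w
      rw [Lm_apply]
      have hm : 1 - (W + u • E0 + v • E1 + w • E2) = 1 - W - u • E0 - v • E1 - w • E2 := by
        abel
      rw [hm]
    rw [hfun]
    exact (((Lm α ω).hasFDerivAt.comp_hasDerivAt 0
      (hasDerivAt_inv_line₀ _ E2 hN))).deriv
  -- middle derivative
  have hmid : ∀ u : ℝ, IsUnit (1 - W - u • E0).det →
      HasDerivAt (fun v : ℝ =>
        deriv (fun w : ℝ =>
          α ⬝ᵥ ((1 - (W + u • E0 + v • E1 + w • E2))⁻¹ *ᵥ ω)) 0)
        (Lm α ω ((1 - W - u • E0)⁻¹ * E1 * (1 - W - u • E0)⁻¹ * E2 * (1 - W - u • E0)⁻¹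
          + (1 - W - u • E0)⁻¹ * E2 * ((1 - W - u • E0)⁻¹ * E1 * (1 - W - u • E0)⁻¹))) 0 := by
    intro u hP
    set P := 1 - W - u • E0 with hPdef
    have hev : ∀ᶠ v : ℝ in nhds 0, IsUnit (P - v • E1).det :=
      eventually_isUnit_det P E1 hP
    have heq : (fun v : ℝ => Lm α ω ((P - v • E1)⁻¹ * E2 * (P - v • E1)⁻¹))
        =ᶠ[nhds 0] (fun v : ℝ =>
          deriv (fun w : ℝ =>
            α ⬝ᵥ ((1 - (W + u • E0 + v • E1 + w • E2))⁻¹ *ᵥ ω)) 0) := by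
      filter_upwards [hev] with v hv
      exact (hinner u v hv).symm
    have hQder : HasDerivAt (fun v : ℝ => (P - v • E1)⁻¹) (P⁻¹ * E1 * P⁻¹) 0 :=
      hasDerivAt_inv_line₀ P E1 hP
    have hprod := (hQder.mul_const E2).mul hQder
    simp only [zero_smul, sub_zero] at hprod
    have hcomp := (Lm α ω).hasFDerivAt.comp_hasDerivAt 0 hprod
    refine HasDerivAt.congr_of_eventuallyEq ?_ heq.symm
    convert hcomp using 2 <;> rfl
  -- outer derivative
  have hev0 : ∀ᶠ u : ℝ in nhds 0, IsUnit (1 - W - u • E0).det :=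
    eventually_isUnit_det (1 - W) E0 h
  have heq : (fun u : ℝ => Lm α ω
        ((1 - W - u • E0)⁻¹ * E1 * (1 - W - u • E0)⁻¹ * E2 * (1 - W - u • E0)⁻¹
          + (1 - W - u • E0)⁻¹ * E2 * ((1 - W - u • E0)⁻¹ * E1 * (1 - W - u • E0)⁻¹)))
      =ᶠ[nhds 0] (fun u : ℝ =>
        deriv (fun v : ℝ =>
          deriv (fun w : ℝ =>
            α ⬝ᵥ ((1 - (W + u • E0 + v • E1 + w • E2))⁻¹ *ᵥ ω)) 0) 0) := by
    filter_upwards [hev0] with u hu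
    exact ((hmid u hu).deriv).symm
  have hPder : HasDerivAt (fun u : ℝ => (1 - W - u • E0)⁻¹) (Q * E0 * Q) 0 :=
    hasDerivAt_inv_line₀ (1 - W) E0 h
  have hterm1 := ((((hPder.mul_const E1).mul hPder).mul_const E2).mul hPder)
  have hterm2 := ((hPder.mul_const E2).mul ((hPder.mul_const E1).mul hPder))
  have hsum := hterm1.add hterm2
  simp only [Pi.mul_apply, zero_smul, sub_zero, ← hQ] at hsum
  have hcomp := (Lm α ω).hasFDerivAt.comp_hasDerivAt 0 hsum
  have hfinal := HasDerivAt.congr_of_eventuallyEq hcomp heq.symm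
  have hmat : (Q * E0 * Q * E1 * Q + Q * E1 * (Q * E0 * Q)) * E2 * Q
        + Q * E1 * Q * E2 * (Q * E0 * Q)
        + (Q * E0 * Q * E2 * (Q * E1 * Q) + Q * E2 * (Q * E0 * Q * E1 * Q + Q * E1 * (Q * E0 * Q)))
      = Q * E0 * Q * E1 * Q * E2 * Q + Q * E0 * Q * E2 * Q * E1 * Q
        + Q * E1 * Q * E0 * Q * E2 * Q + Q * E1 * Q * E2 * Q * E0 * Q
        + Q * E2 * Q * E0 * Q * E1 * Q + Q * E2 * Q * E1 * Q * E0 * Q := by noncomm_ring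
  rw [hmat] at hfinal
  refine hfinal.congr_deriv ?_
  symm
  rw [perm_sum (fun a b c => (α ᵥ* Q) (τ a).1 * Q (τ a).2 (τ b).1 * Q (τ b).2 (τ c).1
    * (Q *ᵥ ω) (τ c).2)]
  have hT : ∀ a b c : Fin 3,
      (α ᵥ* Q) (τ a).1 * Q (τ a).2 (τ b).1 * Q (τ b).2 (τ c).1 * (Q *ᵥ ω) (τ c).2
        = α ⬝ᵥ ((Q * Matrix.single (τ a).1 (τ a).2 1 * Q * Matrix.single (τ b).1 (τ b).2 1
            * Q * Matrix.single (τ c).1 (τ c).2 1 * Q) *ᵥ ω) :=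
    fun a b c => (scalar_extract Q α ω _ _ _ _ _ _).symm
  simp only [hT, map_add, Lm_apply, ← hE0, ← hE1, ← hE2]
  show _ = α ⬝ᵥ (_ *ᵥ ω)
  simp only [Matrix.add_mulVec, dotProduct_add]
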